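/- For all real numbers p, q ∈ [1/4,3/4], writing s = (p+q)/2, the squared Hellinger distance between Bernoulli(p) and Bernoulli(q) satisfies 1 − √(p·q) − √((1−p)·(1−q)) ≤ (q−p)² / (4·√3·s·(1−s)). -/
import Mathlib

set_option maxHeartbeats 1000000


theorem hellinger_bernoulli_le (p q : ℝ) (hp : p ∈ Set.Icc (1/4 : ℝ) (3/4))
    (hq : q ∈ Set.Icc (1/4 : ℝ) (3/4)) :
    1 - Real.sqrt (p * q) - Real.sqrt ((1 - p) * (1 - q)) ≤
      (q - p) ^ 2 / (4 * Real.sqrt 3 * ((p + q) / 2) * (1 - (p + q) / 2)) := by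
  obtain ⟨hp1, hp2⟩ := hp
  obtain ⟨hq1, hq2⟩ := hq
  have hpq : 0 ≤ p * q := by nlinarith
  have hpq' : 0 ≤ (1 - p) * (1 - q) := by nlinarith
  set a := Real.sqrt (p * q) with ha
  set b := Real.sqrt ((1 - p) * (1 - q)) with hb
  have ha2 : a ^ 2 = p * q := Real.sq_sqrt hpq
  have hb2 : b ^ 2 = (1 - p) * (1 - q) := Real.sq_sqrt hpq'
  have ha0 : 0 ≤ a := Real.sqrt_nonneg _
  have hb0 : 0 ≤ b := Real.sqrt_nonneg _
  have h3 : (Real.sqrt 3) ^ 2 = 3 := Real.sq_sqrt (by norm_num)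
  have h3pos : (0:ℝ) < Real.sqrt 3 := Real.sqrt_pos.mpr (by norm_num)
  set t := Real.sqrt 3 with ht
  clear_value a b t
  -- lower bound a ≥ t * s / 2
  have ha_lb : t * ((p + q) / 2) / 2 ≤ a := by
    rw [ha, ht]
    have heq : Real.sqrt 3 * ((p + q) / 2) / 2 = Real.sqrt (3 * ((p + q) / 4) ^ 2) := by
      rw [Real.sqrt_mul (by norm_num), Real.sqrt_sq (by linarith)]
      ring
    rw [heq]
    apply Real.sqrt_le_sqrt
    nlinarith [mul_nonneg (by linarith : (0:ℝ) ≤ 3 * p - q) (by linarith : (0:ℝ) ≤ 3 * q - p)]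
  have hb_lb : t * (1 - (p + q) / 2) / 2 ≤ b := by
    rw [hb, ht]
    have heq : Real.sqrt 3 * (1 - (p + q) / 2) / 2 = Real.sqrt (3 * ((2 - p - q) / 4) ^ 2) := by
      rw [Real.sqrt_mul (by norm_num), Real.sqrt_sq (by linarith)]
      ring
    rw [heq]
    apply Real.sqrt_le_sqrt
    nlinarith [mul_nonneg (by linarith : (0:ℝ) ≤ 3 * (1 - p) - (1 - q))
      (by linarith : (0:ℝ) ≤ 3 * (1 - q) - (1 - p))]
  -- upper bounds a ≤ s, b ≤ 1 - s
  have ha_ub : a ≤ (p + q) / 2 := by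
    rw [ha]
    calc Real.sqrt (p * q) ≤ Real.sqrt (((p + q) / 2) ^ 2) :=
          Real.sqrt_le_sqrt (by nlinarith [sq_nonneg (p - q)])
      _ = (p + q) / 2 := Real.sqrt_sq (by linarith)
  have hb_ub : b ≤ 1 - (p + q) / 2 := by
    rw [hb]
    calc Real.sqrt ((1 - p) * (1 - q)) ≤ Real.sqrt ((1 - (p + q) / 2) ^ 2) :=
          Real.sqrt_le_sqrt (by nlinarith [sq_nonneg (p - q)])
      _ = 1 - (p + q) / 2 := Real.sqrt_sq (by linarith)
  -- key bounds: t * s * (s - a) ≤ d², t * (1-s) * (1-s-b) ≤ d²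
  have h1 : t * ((p + q) / 2) * ((p + q) / 2 - a) ≤ ((q - p) / 2) ^ 2 := by
    have step1 : t * ((p + q) / 2) * ((p + q) / 2 - a) ≤ 2 * a * ((p + q) / 2 - a) := by
      apply mul_le_mul_of_nonneg_right (by linarith) (by linarith)
    have step2 : 2 * a * ((p + q) / 2 - a) ≤ ((q - p) / 2) ^ 2 := by
      have key : ((q - p) / 2) ^ 2 - 2 * a * ((p + q) / 2 - a) = ((p + q) / 2 - a) ^ 2 := by
        linear_combination ha2
      linarith [sq_nonneg ((p + q) / 2 - a)]
    linarith
  have h2 : t * (1 - (p + q) / 2) * ((1 - (p + q) / 2) - b) ≤ ((q - p) / 2) ^ 2 := by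
    have step1 : t * (1 - (p + q) / 2) * ((1 - (p + q) / 2) - b) ≤
        2 * b * ((1 - (p + q) / 2) - b) := by
      apply mul_le_mul_of_nonneg_right (by linarith) (by linarith)
    have step2 : 2 * b * ((1 - (p + q) / 2) - b) ≤ ((q - p) / 2) ^ 2 := by
      have key : ((q - p) / 2) ^ 2 - 2 * b * ((1 - (p + q) / 2) - b) = ((1 - (p + q) / 2) - b) ^ 2 := by
        linear_combination hb2
      linarith [sq_nonneg ((1 - (p + q) / 2) - b)]
    linarith
  have hD : (0:ℝ) < 4 * t * ((p + q) / 2) * (1 - (p + q) / 2) := by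
    apply mul_pos
    apply mul_pos
    · linarith
    · linarith
    · linarith
  rw [le_div_iff₀ hD]
  have H1 := mul_le_mul_of_nonneg_left h1 (by linarith : (0:ℝ) ≤ 4 * (1 - (p + q) / 2))
  have H2 := mul_le_mul_of_nonneg_left h2 (by linarith : (0:ℝ) ≤ 4 * ((p + q) / 2))
  nlinarith [H1, H2]
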